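/- arXiv:2511.16960 — 2 statements merged into one kernel-verified Lean document; each statement's English description precedes it below -/
import Mathlib

section
/- Let Σ be symmetric positive definite, μ ∈ ℝⁿ, b > 0, and G(x) = Φ((b - μᵀx)/√(xᵀΣx)) for x ≠ 0, G(0) = 1. Then all partial derivatives of G at 0 exist and equal zero; i.e., for each coordinate direction e_j, lim_{h → 0⁺} (G(h·e_j) - 1)/h = 0 and lim_{h → 0⁺} (G(-h·e_j) - 1)/h = 0. -/
open MeasureTheory Classical

/-- Standard normal density. -/
noncomputable def stdGaussianPdf (t : ℝ) : ℝ :=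
  (1 / Real.sqrt (2 * Real.pi)) * Real.exp (-t ^ 2 / 2)

/-- Standard normal cumulative distribution function. -/
noncomputable def stdNormalCdf (z : ℝ) : ℝ :=
  ∫ t in Set.Iic z, stdGaussianPdf t

lemma pdf_nonneg (t : ℝ) : 0 ≤ stdGaussianPdf t := by
  unfold stdGaussianPdf
  positivity

lemma pdf_eq (t : ℝ) : stdGaussianPdf t
    = (1 / Real.sqrt (2 * Real.pi)) * Real.exp (-(1/2) * t ^ 2) := by
  unfold stdGaussianPdf; ring_nf

lemma pdf_integrable : Integrable stdGaussianPdf := by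
  have h : Integrable (fun t : ℝ => Real.exp (-(1/2 : ℝ) * t ^ 2)) :=
    integrable_exp_neg_mul_sq (by norm_num)
  have := h.const_mul (1 / Real.sqrt (2 * Real.pi))
  refine this.congr ?_
  filter_upwards with t
  rw [pdf_eq]

lemma integral_pdf : ∫ t, stdGaussianPdf t = 1 := by
  have h2 : ∫ t : ℝ, Real.exp (-(1/2 : ℝ) * t ^ 2) = Real.sqrt (Real.pi / (1/2)) :=
    integral_gaussian (1/2)
  have : ∫ t, stdGaussianPdf t
      = (1 / Real.sqrt (2 * Real.pi)) * ∫ t : ℝ, Real.exp (-(1/2 : ℝ) * t ^ 2) := by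
    rw [← integral_const_mul]
    congr 1; ext t; rw [pdf_eq]
  rw [this, h2]
  have hpi : (0:ℝ) < Real.pi := Real.pi_pos
  rw [show Real.pi / (1/2 : ℝ) = 2 * Real.pi by ring]
  rw [one_div, inv_mul_cancel₀ (by positivity)]

lemma one_sub_cdf (z : ℝ) :
    1 - stdNormalCdf z = ∫ t in Set.Ioi z, stdGaussianPdf t := by
  have := intervalIntegral.integral_Iic_add_Ioi (b := z) (μ := volume)
    (pdf_integrable.integrableOn) (pdf_integrable.integrableOn)
  rw [integral_pdf] at this
  unfold stdNormalCdf
  linarith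

lemma cdf_le_one (z : ℝ) : stdNormalCdf z ≤ 1 := by
  have h := one_sub_cdf z
  have : 0 ≤ ∫ t in Set.Ioi z, stdGaussianPdf t :=
    setIntegral_nonneg measurableSet_Ioi (fun t _ => pdf_nonneg t)
  linarith

lemma tail_le (z : ℝ) (hz : 2 ≤ z) : 1 - stdNormalCdf z ≤ Real.exp (-z) := by
  rw [one_sub_cdf]
  have h1 : ∫ t in Set.Ioi z, stdGaussianPdf t ≤ ∫ t in Set.Ioi z, Real.exp (-t) := by
    apply setIntegral_mono_on
    · exact pdf_integrable.integrableOn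
    · simpa using exp_neg_integrableOn_Ioi z (b := 1) one_pos
    · exact measurableSet_Ioi
    · intro t ht
      have ht2 : 2 ≤ t := le_trans hz (le_of_lt ht)
      have hle : -t ^ 2 / 2 ≤ -t := by nlinarith
      have h2 : Real.exp (-t ^ 2 / 2) ≤ Real.exp (-t) := Real.exp_le_exp.mpr hle
      have hs : 1 / Real.sqrt (2 * Real.pi) ≤ 1 := by
        rw [div_le_one (by positivity)]
        have : (1:ℝ) ≤ 2 * Real.pi := by nlinarith [Real.pi_gt_three]
        calc (1:ℝ) = Real.sqrt 1 := (Real.sqrt_one).symm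
          _ ≤ Real.sqrt (2 * Real.pi) := Real.sqrt_le_sqrt this
      calc stdGaussianPdf t ≤ 1 * Real.exp (-t ^ 2 / 2) := by
            unfold stdGaussianPdf
            exact mul_le_mul_of_nonneg_right hs (Real.exp_nonneg _)
        _ = Real.exp (-t ^ 2 / 2) := one_mul _
        _ ≤ Real.exp (-t) := h2
  calc _ ≤ ∫ t in Set.Ioi z, Real.exp (-t) := h1
    _ = Real.exp (-z) := integral_exp_neg_Ioi z

lemma aux_tendsto (m s b : ℝ) (hb : 0 < b) (hs : 0 < s) :
    Filter.Tendsto (fun h : ℝ => (stdNormalCdf ((b - h * m) / (h * s)) - 1) / h)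
      (nhdsWithin 0 (Set.Ioi 0)) (nhds 0) := by
  set c : ℝ := b / (2 * s) with hc
  have hcpos : 0 < c := by positivity
  -- bound function
  have hB : Filter.Tendsto (fun h : ℝ => Real.exp (-(c / h)) / h)
      (nhdsWithin 0 (Set.Ioi 0)) (nhds 0) := by
    have h1 : Filter.Tendsto (fun h : ℝ => c / h) (nhdsWithin 0 (Set.Ioi 0)) Filter.atTop := by
      have := tendsto_inv_nhdsGT_zero (𝕜 := ℝ)
      simpa [div_eq_mul_inv] using Filter.Tendsto.const_mul_atTop hcpos this
    have h2 := (Real.tendsto_pow_mul_exp_neg_atTop_nhds_zero 1).comp h1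
    have h3 := h2.const_mul (1 / c)
    rw [mul_zero] at h3
    refine h3.congr' ?_
    filter_upwards [self_mem_nhdsWithin] with h hh
    have hh0 : (0:ℝ) < h := hh
    simp only [Function.comp, pow_one]
    field_simp
  apply squeeze_zero_norm' ?_ hB
  set δ : ℝ := min (b / (2 * (|m| + 1))) (c / 2) with hδ
  have hδpos : 0 < δ := by
    apply lt_min
    · positivity
    · positivity
  filter_upwards [Ioo_mem_nhdsGT_of_mem (Set.mem_Ico.mpr ⟨le_refl (0:ℝ), hδpos⟩)] with h hh
  obtain ⟨hh0, hhδ⟩ := hh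
  have hhm : h * |m| ≤ b / 2 := by
    have h1 : h ≤ b / (2 * (|m| + 1)) := le_of_lt (lt_of_lt_of_le hhδ (min_le_left _ _))
    rw [le_div_iff₀ (by positivity)] at h1
    nlinarith [abs_nonneg m, hh0.le]
  have hnum : b / 2 ≤ b - h * m := by
    have : h * m ≤ h * |m| := mul_le_mul_of_nonneg_left (le_abs_self m) hh0.le
    linarith
  have hz : c / h ≤ (b - h * m) / (h * s) := by
    have hcs : c * s = b / 2 := by rw [hc]; field_simp
    rw [div_le_div_iff₀ hh0 (by positivity)]
    nlinarith [hh0.le]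
  have hc2 : 2 ≤ c / h := by
    have h1 : h ≤ c / 2 := le_of_lt (lt_of_lt_of_le hhδ (min_le_right _ _))
    rw [le_div_iff₀ hh0]
    linarith
  set z := (b - h * m) / (h * s) with hzdef
  have hz2 : 2 ≤ z := le_trans hc2 hz
  have htail : 1 - stdNormalCdf z ≤ Real.exp (-(c / h)) := by
    calc 1 - stdNormalCdf z ≤ Real.exp (-z) := tail_le z hz2
      _ ≤ Real.exp (-(c / h)) := Real.exp_le_exp.mpr (by linarith)
  have hle1 : stdNormalCdf z ≤ 1 := cdf_le_one z
  rw [Real.norm_eq_abs, abs_div, abs_of_pos hh0, abs_of_nonpos (by linarith)]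
  gcongr
  linarith


lemma diag_pos (n : ℕ) (S : Matrix (Fin n) (Fin n) ℝ) (hS : S.PosDef) (j : Fin n) :
    0 < S j j := by
  have := hS.dotProduct_mulVec_pos (x := Pi.single j 1) (by
    intro h
    have := congrFun h j
    simp at this)
  simpa [dotProduct, Matrix.mulVec, Pi.single_apply, Finset.sum_ite_eq,
    Finset.sum_ite_eq'] using this

/-- G(x) = Φ((b - μᵀx)/√(xᵀΣx)) for x ≠ 0, G(0) = 1. -/
noncomputable def Gfun (n : ℕ) (Sigma : Matrix (Fin n) (Fin n) ℝ) (μ : Fin n → ℝ) (b : ℝ)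
    (x : Fin n → ℝ) : ℝ :=
  if x = 0 then 1 else
    stdNormalCdf ((b - ∑ i, μ i * x i) / Real.sqrt (∑ i, x i * Sigma.mulVec x i))

lemma Gfun_single (n : ℕ) (Sigma : Matrix (Fin n) (Fin n) ℝ) (μ : Fin n → ℝ) (b : ℝ)
    (j : Fin n) (h : ℝ) (hh : 0 < h) (ε : ℝ) (hε : ε = 1 ∨ ε = -1) :
    Gfun n Sigma μ b (ε • (h • (Pi.single j 1 : Fin n → ℝ)))
      = stdNormalCdf ((b - h * (ε * μ j)) / (h * Real.sqrt (Sigma j j))) := by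
  have hε1 : ε * ε = 1 := by rcases hε with h1 | h1 <;> simp [h1]
  have hε0 : ε ≠ 0 := by rcases hε with h1 | h1 <;> simp [h1]
  set x : Fin n → ℝ := ε • (h • (Pi.single j 1 : Fin n → ℝ)) with hx
  have hxi : ∀ i, x i = if i = j then ε * h else 0 := by
    intro i
    simp [hx, Pi.single_apply, mul_ite]
  have hx0 : x ≠ 0 := by
    intro h0
    have := congrFun h0 j
    rw [hxi j] at this
    simp at this
    rcases this with h1 | h1
    · exact hε0 h1
    · exact hh.ne' h1
  have hsum1 : ∑ i, μ i * x i = ε * h * μ j := by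
    rw [Finset.sum_congr rfl (fun i _ => by rw [hxi i])]
    simp [mul_ite, Finset.sum_ite_eq', mul_comm]
  have hmv : ∀ k, Sigma.mulVec x k = Sigma k j * (ε * h) := by
    intro k
    simp only [Matrix.mulVec, dotProduct]
    rw [Finset.sum_congr rfl (fun i _ => by rw [hxi i])]
    simp [mul_ite, Finset.sum_ite_eq']
  have hsum2 : ∑ i, x i * Sigma.mulVec x i = h ^ 2 * Sigma j j := by
    rw [Finset.sum_congr rfl (fun i _ => by rw [hxi i, hmv i])]
    simp only [ite_mul, zero_mul, Finset.sum_ite_eq', Finset.mem_univ, if_true]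
    have : ε * h * (Sigma j j * (ε * h)) = (ε * ε) * (h ^ 2 * Sigma j j) := by ring
    rw [this, hε1, one_mul]
  have hsqrt : Real.sqrt (∑ i, x i * Sigma.mulVec x i) = h * Real.sqrt (Sigma j j) := by
    rw [hsum2, Real.sqrt_mul (by positivity), Real.sqrt_sq hh.le]
  rw [Gfun, if_neg hx0, hsum1, hsqrt]
  ring_nf

/-- One-sided directional difference quotients of G at 0 vanish in every coordinate
direction, so all partial derivatives of G at 0 exist and equal 0. -/
theorem stmt10 (n : ℕ) (Sigma : Matrix (Fin n) (Fin n) ℝ) (hS : Sigma.PosDef)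
    (μ : Fin n → ℝ) (b : ℝ) (hb : 0 < b) (j : Fin n) :
    Filter.Tendsto (fun h : ℝ =>
        (Gfun n Sigma μ b (h • (Pi.single j 1 : Fin n → ℝ)) - 1) / h)
      (nhdsWithin 0 (Set.Ioi 0)) (nhds 0) ∧
    Filter.Tendsto (fun h : ℝ =>
        (Gfun n Sigma μ b (-(h • (Pi.single j 1 : Fin n → ℝ))) - 1) / h)
      (nhdsWithin 0 (Set.Ioi 0)) (nhds 0) := by
  have hs : 0 < Real.sqrt (Sigma j j) := Real.sqrt_pos.mpr (diag_pos n Sigma hS j)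
  constructor
  · refine (aux_tendsto (μ j) _ b hb hs).congr' ?_
    filter_upwards [self_mem_nhdsWithin] with h hh
    have := Gfun_single n Sigma μ b j h hh 1 (Or.inl rfl)
    simp only [one_smul, one_mul] at this
    rw [this]
  · refine (aux_tendsto (-μ j) _ b hb hs).congr' ?_
    filter_upwards [self_mem_nhdsWithin] with h hh
    have := Gfun_single n Sigma μ b j h hh (-1) (Or.inr rfl)
    simp only [neg_smul, one_smul, neg_one_mul] at this
    rw [this]
end

section
/- For every real t > -1, the Gaussian tail integral satisfies 2/(t + √(t² + 4)) ≤ e^{t²/2}·∫_t^∞ e^{-z²/2} dz ≤ 4/(3t + √(t² + 8)). -/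
open MeasureTheory Set Filter Topology

private lemma intf : Integrable (fun z : ℝ => Real.exp (-z ^ 2 / 2)) := by
  have h := integrable_exp_neg_mul_sq (b := 1/2) (by norm_num)
  have : (fun z : ℝ => Real.exp (-z ^ 2 / 2)) = fun z : ℝ => Real.exp (-(1/2) * z ^ 2) := by
    funext z; ring_nf
  rw [this]; exact h

private lemma G_split {a b : ℝ} (hab : a ≤ b) :
    (∫ z in Ioi a, Real.exp (-z ^ 2 / 2)) =
      (∫ z in a..b, Real.exp (-z ^ 2 / 2)) + ∫ z in Ioi b, Real.exp (-z ^ 2 / 2) := by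
  rw [intervalIntegral.integral_of_le hab, ← Ioc_union_Ioi_eq_Ioi hab,
    setIntegral_union (Ioc_disjoint_Ioi le_rfl) measurableSet_Ioi
      intf.integrableOn intf.integrableOn]

private lemma G_eq : (fun u : ℝ => ∫ z in Ioi u, Real.exp (-z ^ 2 / 2)) =
    fun u : ℝ => (∫ z in Ioi (0:ℝ), Real.exp (-z ^ 2 / 2)) -
      ∫ z in (0:ℝ)..u, Real.exp (-z ^ 2 / 2) := by
  funext u
  rcases le_total u 0 with h | h
  · rw [G_split h, intervalIntegral.integral_symm]; ring
  · rw [G_split h]; ring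

private lemma G_hasDeriv (t : ℝ) :
    HasDerivAt (fun u : ℝ => ∫ z in Ioi u, Real.exp (-z ^ 2 / 2))
      (-(Real.exp (-t ^ 2 / 2))) t := by
  have hfc : Continuous fun z : ℝ => Real.exp (-z ^ 2 / 2) := by continuity
  have h := intervalIntegral.integral_hasDerivAt_right (a := 0) (b := t)
    intf.intervalIntegrable hfc.stronglyMeasurable.stronglyMeasurableAtFilter
    hfc.continuousAt
  rw [G_eq]
  refine ((hasDerivAt_const t _).sub h).congr_deriv ?_
  ring

private lemma G_tendsto :
    Tendsto (fun u : ℝ => ∫ z in Ioi u, Real.exp (-z ^ 2 / 2)) atTop (𝓝 0) := by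
  have h := intervalIntegral_tendsto_integral_Ioi 0 intf.integrableOn tendsto_id
  rw [G_eq]
  have h2 : Tendsto (fun u : ℝ => (∫ z in Ioi (0:ℝ), Real.exp (-z ^ 2 / 2)) -
      ∫ z in (0:ℝ)..u, Real.exp (-z ^ 2 / 2)) atTop
      (𝓝 ((∫ z in Ioi (0:ℝ), Real.exp (-z ^ 2 / 2)) -
        ∫ z in Ioi (0:ℝ), Real.exp (-z ^ 2 / 2))) := tendsto_const_nhds.sub h
  simpa using h2

private lemma sqrt_deriv (c : ℝ) (hc : 0 < c) (u : ℝ) :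
    HasDerivAt (fun x : ℝ => Real.sqrt (x ^ 2 + c)) (u / Real.sqrt (u ^ 2 + c)) u := by
  have h1 : HasDerivAt (fun x : ℝ => x ^ 2 + c) (2 * u) u := by
    simpa [mul_comm] using (hasDerivAt_pow 2 u).add_const c
  have h2 := (Real.hasDerivAt_sqrt (by positivity : u ^ 2 + c ≠ 0)).comp u h1
  refine h2.congr_deriv ?_
  have hs : Real.sqrt (u ^ 2 + c) ≠ 0 := by positivity
  field_simp

private lemma low_key (u : ℝ) :
    u * (2 / (u + Real.sqrt (u ^ 2 + 4))) - 1 ≤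
      -(2 * (1 + u / Real.sqrt (u ^ 2 + 4))) / (u + Real.sqrt (u ^ 2 + 4)) ^ 2 := by
  set r := Real.sqrt (u ^ 2 + 4) with hrdef
  have hr2 : r ^ 2 = u ^ 2 + 4 := Real.sq_sqrt (by positivity)
  have hrpos : 0 < r := Real.sqrt_pos.2 (by positivity)
  have hur : u < r := by
    nlinarith [abs_nonneg u, sq_abs u, le_abs_self u]
  have he : 0 < u + r := by nlinarith
  rw [← sub_nonneg]
  have heq : -(2 * (1 + u / r)) / (u + r) ^ 2 - (u * (2 / (u + r)) - 1) =
      (-2 * (r + u) + r * (u + r) * (r - u)) / ((u + r) ^ 2 * r) := by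
    field_simp
    ring
  rw [heq]
  apply div_nonneg _ (by positivity)
  nlinarith [hr2, hur, hrpos]

private lemma up_key {u : ℝ} (hu : -1 < u) :
    -(4 * (3 + u / Real.sqrt (u ^ 2 + 8))) / (3 * u + Real.sqrt (u ^ 2 + 8)) ^ 2 ≤
      u * (4 / (3 * u + Real.sqrt (u ^ 2 + 8))) - 1 := by
  set s := Real.sqrt (u ^ 2 + 8) with hsdef
  have hs2 : s ^ 2 = u ^ 2 + 8 := Real.sq_sqrt (by positivity)
  have hspos : 0 < s := Real.sqrt_pos.2 (by positivity)
  have hd : 0 < 3 * u + s := by nlinarith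
  have key : u * (u ^ 2 + 6) ≤ s * (u ^ 2 + 2) := by
    rcases le_or_gt u 0 with h | h
    · nlinarith [mul_pos hspos (show (0:ℝ) < u ^ 2 + 2 by positivity)]
    · have hb : 0 < u * (u ^ 2 + 6) + s * (u ^ 2 + 2) := by positivity
      by_contra hc
      push_neg at hc
      have hs2' : s ^ 2 * (u ^ 2 + 2) ^ 2 = (u ^ 2 + 8) * (u ^ 2 + 2) ^ 2 := by
        rw [hs2]
      nlinarith [mul_pos (sub_pos.2 hc) hb, hs2']
  rw [← sub_nonneg]
  have heq : u * (4 / (3 * u + s)) - 1 - (-(4 * (3 + u / s)) / (3 * u + s) ^ 2) =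
      ((4 * u - (3 * u + s)) * (3 * u + s) * s + 4 * (3 * s + u)) /
        ((3 * u + s) ^ 2 * s) := by
    have h2 : s ≠ 0 := hspos.ne'
    generalize hD : 3 * u + s = D at hd ⊢
    have h1 : D ≠ 0 := hd.ne'
    field_simp
    ring
  rw [heq]
  apply div_nonneg _ (by positivity)
  nlinarith [key, hs2, hd, hspos]

section helpers
private lemma hE_deriv (u : ℝ) :
    HasDerivAt (fun x : ℝ => Real.exp (-x ^ 2 / 2)) (Real.exp (-u ^ 2 / 2) * (-u)) u := by
  have hinner : HasDerivAt (fun x : ℝ => -x ^ 2 / 2) (-u) u := by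
    have h := ((hasDerivAt_pow 2 u).neg.div_const 2)
    refine h.congr_deriv ?_
    push_cast; ring
  exact hinner.exp

private lemma hE_tendsto :
    Tendsto (fun u : ℝ => Real.exp (-u ^ 2 / 2)) atTop (𝓝 0) := by
  apply Real.tendsto_exp_atBot.comp
  have h1 : Tendsto (fun u : ℝ => u ^ 2 / 2) atTop atTop :=
    (tendsto_pow_atTop two_ne_zero).atTop_div_const (by norm_num)
  have := tendsto_neg_atTop_atBot.comp h1
  convert this using 2 with u
  simp [Function.comp]; ring
end helpers

/-- Szarek–Werner nonsymmetric Gaussian tail inequality. -/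
theorem stmt11 (t : ℝ) (ht : -1 < t) :
    2 / (t + Real.sqrt (t ^ 2 + 4)) ≤
        Real.exp (t ^ 2 / 2) * ∫ z in Set.Ioi t, Real.exp (-z ^ 2 / 2) ∧
      Real.exp (t ^ 2 / 2) * (∫ z in Set.Ioi t, Real.exp (-z ^ 2 / 2)) ≤
        4 / (3 * t + Real.sqrt (t ^ 2 + 8)) := by
  have hexp1 : Real.exp (t ^ 2 / 2) * Real.exp (-t ^ 2 / 2) = 1 := by
    rw [← Real.exp_add]; ring_nf; exact Real.exp_zero
  constructor
  · -- lower bound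
    set L : ℝ → ℝ := fun x =>
      (∫ z in Ioi x, Real.exp (-z ^ 2 / 2)) -
        Real.exp (-x ^ 2 / 2) * (2 / (x + Real.sqrt (x ^ 2 + 4))) with hLdef
    have hderiv : ∀ u : ℝ, HasDerivAt L
        (Real.exp (-u ^ 2 / 2) * ((u * (2 / (u + Real.sqrt (u ^ 2 + 4))) - 1) -
          -(2 * (1 + u / Real.sqrt (u ^ 2 + 4))) / (u + Real.sqrt (u ^ 2 + 4)) ^ 2)) u := by
      intro u
      have hrpos : 0 < Real.sqrt (u ^ 2 + 4) := Real.sqrt_pos.2 (by positivity)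
      have hr2 : Real.sqrt (u ^ 2 + 4) ^ 2 = u ^ 2 + 4 := Real.sq_sqrt (by positivity)
      have hne : u + Real.sqrt (u ^ 2 + 4) ≠ 0 := by nlinarith
      have hden : HasDerivAt (fun x : ℝ => x + Real.sqrt (x ^ 2 + 4))
          (1 + u / Real.sqrt (u ^ 2 + 4)) u :=
        (hasDerivAt_id u).add (sqrt_deriv 4 (by norm_num) u)
      have hinv := hden.inv hne
      have hl : HasDerivAt (fun x : ℝ => 2 / (x + Real.sqrt (x ^ 2 + 4)))
          (2 * (-(1 + u / Real.sqrt (u ^ 2 + 4)) / (u + Real.sqrt (u ^ 2 + 4)) ^ 2)) u := by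
        simpa [div_eq_mul_inv] using hinv.const_mul 2
      have h := (G_hasDeriv u).sub ((hE_deriv u).mul hl)
      refine h.congr_deriv ?_
      ring
    have hdiff : Differentiable ℝ L := fun u => (hderiv u).differentiableAt
    have hmono : AntitoneOn L (Ici t) := by
      apply antitoneOn_of_deriv_nonpos (convex_Ici t) hdiff.continuous.continuousOn
        hdiff.differentiableOn
      intro x hx
      rw [(hderiv x).deriv]
      have hk := low_key x
      exact mul_nonpos_of_nonneg_of_nonpos (Real.exp_pos _).le (by linarith)
    have h1 : Tendsto (fun u : ℝ => Real.exp (-u ^ 2 / 2) *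
        (2 / (u + Real.sqrt (u ^ 2 + 4)))) atTop (𝓝 0) := by
      refine tendsto_of_tendsto_of_tendsto_of_le_of_le' tendsto_const_nhds hE_tendsto ?_ ?_
      · filter_upwards [eventually_ge_atTop (0:ℝ)] with u hu
        have hrpos : 0 < Real.sqrt (u ^ 2 + 4) := Real.sqrt_pos.2 (by positivity)
        have : 0 < u + Real.sqrt (u ^ 2 + 4) := by linarith
        positivity
      · filter_upwards [eventually_ge_atTop (0:ℝ)] with u hu
        have hr4 : 2 ≤ Real.sqrt (u ^ 2 + 4) := by
          rw [show (2:ℝ) = Real.sqrt 4 by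
            rw [show (4:ℝ) = 2 ^ 2 by norm_num, Real.sqrt_sq (by norm_num)]]
          exact Real.sqrt_le_sqrt (by nlinarith)
        have hl1 : 2 / (u + Real.sqrt (u ^ 2 + 4)) ≤ 1 := by
          rw [div_le_one (by linarith)]; linarith
        exact mul_le_of_le_one_right (Real.exp_pos _).le hl1
    have hLlim : Tendsto L atTop (𝓝 0) := by
      have h0 := G_tendsto.sub h1
      simpa using h0
    have hL0 : 0 ≤ L t := by
      refine le_of_tendsto hLlim ?_
      filter_upwards [eventually_ge_atTop t] with x hx
      exact hmono self_mem_Ici hx hx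
    have hkey : Real.exp (-t ^ 2 / 2) * (2 / (t + Real.sqrt (t ^ 2 + 4))) ≤
        ∫ z in Ioi t, Real.exp (-z ^ 2 / 2) := by
      have := hL0
      simp only [hLdef] at this
      linarith
    calc 2 / (t + Real.sqrt (t ^ 2 + 4))
        = Real.exp (t ^ 2 / 2) *
            (Real.exp (-t ^ 2 / 2) * (2 / (t + Real.sqrt (t ^ 2 + 4)))) := by
          rw [← mul_assoc, hexp1, one_mul]
      _ ≤ Real.exp (t ^ 2 / 2) * ∫ z in Ioi t, Real.exp (-z ^ 2 / 2) :=
          mul_le_mul_of_nonneg_left hkey (Real.exp_pos _).le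
  · -- upper bound
    set U : ℝ → ℝ := fun x =>
      Real.exp (-x ^ 2 / 2) * (4 / (3 * x + Real.sqrt (x ^ 2 + 8))) -
        ∫ z in Ioi x, Real.exp (-z ^ 2 / 2) with hUdef
    have hderiv : ∀ u : ℝ, -1 < u → HasDerivAt U
        (Real.exp (-u ^ 2 / 2) *
          (-(4 * (3 + u / Real.sqrt (u ^ 2 + 8))) / (3 * u + Real.sqrt (u ^ 2 + 8)) ^ 2 -
            (u * (4 / (3 * u + Real.sqrt (u ^ 2 + 8))) - 1))) u := by
      intro u hu
      have hspos : 0 < Real.sqrt (u ^ 2 + 8) := Real.sqrt_pos.2 (by positivity)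
      have hs2 : Real.sqrt (u ^ 2 + 8) ^ 2 = u ^ 2 + 8 := Real.sq_sqrt (by positivity)
      have hne : 3 * u + Real.sqrt (u ^ 2 + 8) ≠ 0 := by nlinarith
      have hden : HasDerivAt (fun x : ℝ => 3 * x + Real.sqrt (x ^ 2 + 8))
          (3 + u / Real.sqrt (u ^ 2 + 8)) u := by
        have h3 : HasDerivAt (fun x : ℝ => 3 * x) 3 u := by
          simpa using (hasDerivAt_id u).const_mul (3:ℝ)
        exact h3.add (sqrt_deriv 8 (by norm_num) u)
      have hinv := hden.inv hne
      have hh : HasDerivAt (fun x : ℝ => 4 / (3 * x + Real.sqrt (x ^ 2 + 8)))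
          (4 * (-(3 + u / Real.sqrt (u ^ 2 + 8)) /
            (3 * u + Real.sqrt (u ^ 2 + 8)) ^ 2)) u := by
        simpa [div_eq_mul_inv] using hinv.const_mul 4
      have h := ((hE_deriv u).mul hh).sub (G_hasDeriv u)
      refine h.congr_deriv ?_
      ring
    have hmono : AntitoneOn U (Ici t) := by
      apply antitoneOn_of_deriv_nonpos (convex_Ici t)
      · intro x hx
        exact (hderiv x (lt_of_lt_of_le ht hx)).continuousAt.continuousWithinAt
      · intro x hx
        rw [interior_Ici] at hx
        exact (hderiv x (ht.trans hx)).differentiableAt.differentiableWithinAt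
      · intro x hx
        rw [interior_Ici] at hx
        rw [(hderiv x (ht.trans hx)).deriv]
        have hk := up_key (ht.trans hx)
        exact mul_nonpos_of_nonneg_of_nonpos (Real.exp_pos _).le (by linarith)
    have h1 : Tendsto (fun u : ℝ => Real.exp (-u ^ 2 / 2) *
        (4 / (3 * u + Real.sqrt (u ^ 2 + 8)))) atTop (𝓝 0) := by
      have h2 : Tendsto (fun u : ℝ => Real.exp (-u ^ 2 / 2) * 2) atTop (𝓝 0) := by
        simpa using hE_tendsto.mul_const (2:ℝ)
      refine tendsto_of_tendsto_of_tendsto_of_le_of_le' tendsto_const_nhds h2 ?_ ?_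
      · filter_upwards [eventually_ge_atTop (0:ℝ)] with u hu
        have hspos : 0 < Real.sqrt (u ^ 2 + 8) := Real.sqrt_pos.2 (by positivity)
        have : 0 < 3 * u + Real.sqrt (u ^ 2 + 8) := by linarith
        positivity
      · filter_upwards [eventually_ge_atTop (0:ℝ)] with u hu
        have hs8 : 2 ≤ Real.sqrt (u ^ 2 + 8) := by
          rw [show (2:ℝ) = Real.sqrt 4 by
            rw [show (4:ℝ) = 2 ^ 2 by norm_num, Real.sqrt_sq (by norm_num)]]
          exact Real.sqrt_le_sqrt (by nlinarith)
        have hl1 : 4 / (3 * u + Real.sqrt (u ^ 2 + 8)) ≤ 2 := by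
          rw [div_le_iff₀ (by linarith)]; linarith
        exact mul_le_mul_of_nonneg_left hl1 (Real.exp_pos _).le
    have hUlim : Tendsto U atTop (𝓝 0) := by
      have h0 := h1.sub G_tendsto
      simpa using h0
    have hU0 : 0 ≤ U t := by
      refine le_of_tendsto hUlim ?_
      filter_upwards [eventually_ge_atTop t] with x hx
      exact hmono self_mem_Ici hx hx
    have hkey : (∫ z in Ioi t, Real.exp (-z ^ 2 / 2)) ≤
        Real.exp (-t ^ 2 / 2) * (4 / (3 * t + Real.sqrt (t ^ 2 + 8))) := by
      have := hU0
      simp only [hUdef] at this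
      linarith
    calc Real.exp (t ^ 2 / 2) * ∫ z in Ioi t, Real.exp (-z ^ 2 / 2)
        ≤ Real.exp (t ^ 2 / 2) *
            (Real.exp (-t ^ 2 / 2) * (4 / (3 * t + Real.sqrt (t ^ 2 + 8)))) :=
          mul_le_mul_of_nonneg_left hkey (Real.exp_pos _).le
      _ = 4 / (3 * t + Real.sqrt (t ^ 2 + 8)) := by
          rw [← mul_assoc, hexp1, one_mul]
end
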